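/- Let A₁,…,A_k be invertible 3×3 rational matrices and let B be the 3×3 matrix with (B)_{1,1} = 1 and all other entries 0. In ℕ∞, let m₀ = sInf {ℓ ≥ 1 | some product of ℓ matrices chosen (with repetition) from {A₁,…,A_k,B} equals the zero matrix} and n₀ = sInf {n ≥ 1 | some product A_{i₁}⋯A_{i_n} of n matrices from {A₁,…,A_k} has (·)_{1,1} = 0}. Then m₀ = n₀ + 2. -/

import Mathlib

/-- The rank-one matrix `B` with a single `1` in the upper-left corner. -/
def Bmat : Matrix (Fin 3) (Fin 3) ℚ :=
  !![1, 0, 0;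
     0, 0, 0;
     0, 0, 0]

private lemma Bmat_ne_zero : Bmat ≠ 0 := by
  intro h
  have := congrFun (congrFun h 0) 0
  simp [Bmat] at this

private lemma B_mul_B (M : Matrix (Fin 3) (Fin 3) ℚ) :
    Bmat * M * Bmat = M 0 0 • Bmat := by
  ext i j
  simp only [Matrix.smul_apply, smul_eq_mul]
  fin_cases i <;> fin_cases j <;>
    simp [Bmat, Matrix.mul_apply, Fin.sum_univ_three, Matrix.vecHead, Matrix.vecTail,
      Matrix.vecMul, dotProduct]

private lemma unit_left_cancel {U X : Matrix (Fin 3) (Fin 3) ℚ}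
    (h : IsUnit U) (hx : U * X = 0) : X = 0 := by
  obtain ⟨u, rfl⟩ := h
  calc X = ↑u⁻¹ * (↑u * X) := by rw [← mul_assoc, Units.inv_mul, one_mul]
    _ = 0 := by rw [hx, mul_zero]

private lemma unit_right_cancel {U X : Matrix (Fin 3) (Fin 3) ℚ}
    (h : IsUnit U) (hx : X * U = 0) : X = 0 := by
  obtain ⟨u, rfl⟩ := h
  calc X = X * ↑u * ↑u⁻¹ := by rw [mul_assoc, Units.mul_inv, mul_one]
    _ = 0 := by rw [hx, zero_mul]

private lemma aux2 {k : ℕ} (A : Fin k → Matrix (Fin 3) (Fin 3) ℚ)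
    (hA : ∀ i, IsUnit (A i)) :
    ∀ L : List (Matrix (Fin 3) (Fin 3) ℚ),
      (∀ x ∈ L, (∃ i, x = A i) ∨ x = Bmat) →
      ∀ J : List (Fin k), Bmat * (J.map A).prod * L.prod = 0 →
      ∃ n : ℕ, 1 ≤ n ∧ n + 1 ≤ J.length + L.length ∧
        ∃ idx : Fin n → Fin k,
          (List.ofFn fun j => A (idx j)).prod 0 0 = 0 := by
  intro L
  induction L with
  | nil =>
    intro _ J h
    exfalso
    have hP : IsUnit (J.map A).prod :=
      List.prod_isUnit (by
        intro x hx
        obtain ⟨i, _, rfl⟩ := List.mem_map.mp hx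
        exact hA i)
    simp only [List.prod_nil, mul_one] at h
    exact Bmat_ne_zero (unit_right_cancel hP h)
  | cons x L' ih =>
    intro hg J h
    have hgL' : ∀ y ∈ L', (∃ i, y = A i) ∨ y = Bmat :=
      fun y hy => hg y (List.mem_cons_of_mem _ hy)
    rcases hg x (List.mem_cons_self) with ⟨i, rfl⟩ | rfl
    · -- head is A i
      have h' : Bmat * ((J ++ [i]).map A).prod * L'.prod = 0 := by
        simp only [List.prod_cons] at h
        simpa [mul_assoc] using h
      obtain ⟨n, hn1, hlen, idx, h00⟩ := ih hgL' (J ++ [i]) h'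
      refine ⟨n, hn1, ?_, idx, h00⟩
      simp only [List.length_append, List.length_cons, List.length_nil,
        List.length_singleton] at hlen ⊢
      omega
    · -- head is Bmat
      set P := (J.map A).prod with hPdef
      have h' : (P 0 0) • (Bmat * L'.prod) = 0 := by
        simp only [List.prod_cons] at h
        rw [← smul_mul_assoc, ← B_mul_B]
        calc Bmat * P * Bmat * L'.prod = Bmat * P * (Bmat * L'.prod) := by
              rw [mul_assoc]
          _ = 0 := h
      rcases smul_eq_zero.mp h' with hP00 | hBL
      · -- P 0 0 = 0 : the list J gives the witness
        have hJne : J ≠ [] := by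
          rintro rfl
          simp only [List.map_nil, List.prod_nil, hPdef, Matrix.one_apply_eq] at hP00
          exact one_ne_zero hP00
        refine ⟨J.length, List.length_pos_iff.mpr hJne, ?_, fun j => J.get j, ?_⟩
        · simp only [List.length_cons]; omega
        · have h5 : (List.ofFn fun j => A (J.get j)) = J.map A := by
            conv_rhs => rw [← List.ofFn_get J]
            exact List.map_ofFn.symm
          rw [h5]
          exact hP00
      · -- Bmat * L'.prod = 0 : recurse with empty J
        obtain ⟨n, hn1, hlen, idx, h00⟩ := ih hgL' [] (by simpa using hBL)
        refine ⟨n, hn1, ?_, idx, h00⟩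
        simp only [List.length_nil, List.length_cons] at hlen ⊢
        omega

private lemma aux1 {k : ℕ} (A : Fin k → Matrix (Fin 3) (Fin 3) ℚ)
    (hA : ∀ i, IsUnit (A i)) :
    ∀ L : List (Matrix (Fin 3) (Fin 3) ℚ),
      (∀ x ∈ L, (∃ i, x = A i) ∨ x = Bmat) → L.prod = 0 →
      ∃ n : ℕ, 1 ≤ n ∧ n + 2 ≤ L.length ∧
        ∃ idx : Fin n → Fin k,
          (List.ofFn fun j => A (idx j)).prod 0 0 = 0 := by
  intro L
  induction L with
  | nil =>
    intro _ h
    have h1 : (1 : Matrix (Fin 3) (Fin 3) ℚ) = 0 := by rwa [List.prod_nil] at h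
    exact absurd h1 one_ne_zero
  | cons x L' ih =>
    intro hg h
    have hgL' : ∀ y ∈ L', (∃ i, y = A i) ∨ y = Bmat :=
      fun y hy => hg y (List.mem_cons_of_mem _ hy)
    rcases hg x (List.mem_cons_self) with ⟨i, rfl⟩ | rfl
    · have h' : L'.prod = 0 := by
        apply unit_left_cancel (hA i)
        simpa [List.prod_cons] using h
      obtain ⟨n, hn1, hlen, idx, h00⟩ := ih hgL' h'
      exact ⟨n, hn1, by simp only [List.length_cons]; omega, idx, h00⟩
    · have h' : Bmat * (([] : List (Fin k)).map A).prod * L'.prod = 0 := by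
        simpa [List.prod_cons] using h
      obtain ⟨n, hn1, hlen, idx, h00⟩ := aux2 A hA L' hgL' [] h'
      refine ⟨n, hn1, ?_, idx, h00⟩
      simp only [List.length_nil, List.length_cons] at hlen ⊢
      omega

theorem mortality_threshold {k : ℕ} (A : Fin k → Matrix (Fin 3) (Fin 3) ℚ)
    (hA : ∀ i, IsUnit (A i)) :
    sInf {ℓ : ℕ∞ | ∃ m : ℕ, ℓ = (m : ℕ∞) ∧ 1 ≤ m ∧
        ∃ M : Fin m → Matrix (Fin 3) (Fin 3) ℚ,
          (∀ j : Fin m, (∃ i, M j = A i) ∨ M j = Bmat) ∧ (List.ofFn M).prod = 0} =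
      sInf {ℓ : ℕ∞ | ∃ n : ℕ, ℓ = (n : ℕ∞) ∧ 1 ≤ n ∧
        ∃ idx : Fin n → Fin k,
          (List.ofFn fun j => A (idx j)).prod 0 0 = 0} + 2 := by
  set Lset : Set ℕ∞ := {ℓ : ℕ∞ | ∃ m : ℕ, ℓ = (m : ℕ∞) ∧ 1 ≤ m ∧
        ∃ M : Fin m → Matrix (Fin 3) (Fin 3) ℚ,
          (∀ j : Fin m, (∃ i, M j = A i) ∨ M j = Bmat) ∧ (List.ofFn M).prod = 0}
    with hLset
  set Rset : Set ℕ∞ := {ℓ : ℕ∞ | ∃ n : ℕ, ℓ = (n : ℕ∞) ∧ 1 ≤ n ∧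
        ∃ idx : Fin n → Fin k,
          (List.ofFn fun j => A (idx j)).prod 0 0 = 0} with hRset
  apply le_antisymm
  · -- sInf Lset ≤ sInf Rset + 2
    rcases Set.eq_empty_or_nonempty Rset with he | hne
    · rw [he, sInf_empty]
      exact le_top.trans (by simp)
    · obtain ⟨n, hln, hn1, idx, h00⟩ := csInf_mem hne
      rw [hln]
      have hmem : ((n + 2 : ℕ) : ℕ∞) ∈ Lset := by
        refine ⟨n + 2, rfl, by omega,
          Fin.cons Bmat (Fin.snoc (fun j => A (idx j)) Bmat), ?_, ?_⟩
        · intro j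
          refine Fin.cases ?_ (fun i => ?_) j
          · right; simp
          · simp only [Fin.cons_succ]
            refine Fin.lastCases ?_ (fun i' => ?_) i
            · right; simp
            · left; exact ⟨idx i', by simp⟩
        · have hofn : List.ofFn (Fin.cons Bmat
              (Fin.snoc (fun j => A (idx j)) Bmat) : Fin (n + 2) → _) =
              Bmat :: ((List.ofFn fun j => A (idx j)).concat Bmat) := by
            rw [List.ofFn_succ]
            simp only [Fin.cons_zero, Fin.cons_succ]
            congr 1
            rw [List.ofFn_succ']
            simp
          rw [hofn]
          simp only [List.prod_cons, List.prod_concat]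
          rw [← mul_assoc, B_mul_B, h00, zero_smul]
      have := sInf_le hmem
      calc sInf Lset ≤ ((n + 2 : ℕ) : ℕ∞) := this
        _ = (n : ℕ∞) + 2 := by push_cast; ring
  · -- sInf Rset + 2 ≤ sInf Lset
    apply le_sInf
    rintro ℓ ⟨m, rfl, hm1, M, hgood, hzero⟩
    have hg : ∀ x ∈ List.ofFn M, (∃ i, x = A i) ∨ x = Bmat := by
      intro x hx
      obtain ⟨j, rfl⟩ := List.mem_ofFn.mp hx
      exact hgood j
    obtain ⟨n, hn1, hlen, idx, h00⟩ := aux1 A hA (List.ofFn M) hg hzero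
    rw [List.length_ofFn] at hlen
    have h1 : sInf Rset ≤ (n : ℕ∞) := sInf_le ⟨n, rfl, hn1, idx, h00⟩
    calc sInf Rset + 2 ≤ (n : ℕ∞) + 2 := add_le_add_left h1 2
      _ = ((n + 2 : ℕ) : ℕ∞) := by push_cast; ring
      _ ≤ (m : ℕ∞) := Nat.cast_le.mpr hlen
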